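/- arXiv:2509.22588 — 2 statements merged into one kernel-verified Lean document; each statement's English description precedes it below -/
import Mathlib

section
/- Let z(s) : [a,b] → ℂ be an arc-length parametrization (|z'(s)| = 1) of a Dini-smooth Jordan arc, with ω the modulus of continuity of z'. Then there exists δ > 0 such that for every interval I ⊂ [a,b] of length |I| < δ and every point s₀ ∈ I, the total variation over I ∖ {s₀} of any continuous branch of the argument s ↦ arg(z(s) − z(s₀)) is at most 8 ∫₀^δ ω(t)/t dt. -/
open Filter Topology MeasureTheory Set

noncomputable section

/-- The supremum norm of `f` over the set `Γ`. -/
def supNorm (Γ : Set ℂ) (f : ℂ → ℂ) : ℝ := sSup ((fun z => ‖f z‖) '' Γ)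

/-- `Γ` is a Jordan curve: the image of a continuous `2π`-periodic map `ℝ → ℂ` that is
injective modulo the period. -/
def IsJordanCurve (Γ : Set ℂ) : Prop :=
  ∃ f : ℝ → ℂ, Continuous f ∧ Function.Periodic f (2 * Real.pi) ∧
    (∀ s t : ℝ, f s = f t → ∃ n : ℤ, t - s = n * (2 * Real.pi)) ∧
    Γ = Set.range f

/-- The modulus of continuity of `g` on the interval `[a, b]`, evaluated at `t`. -/
def modCont (g : ℝ → ℂ) (a b t : ℝ) : ℝ :=
  sSup {d : ℝ | ∃ s₁ ∈ Set.Icc a b, ∃ s₂ ∈ Set.Icc a b, |s₁ - s₂| ≤ t ∧ d = ‖g s₁ - g s₂‖}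

/-- `γ`, with derivative `γ'`, parametrizes a Dini-smooth Jordan arc on `[a, b]`:
`γ'` is continuous and nonvanishing on `[a, b]` and its modulus of continuity `ω`
satisfies `∫₀¹ ω(t)/t dt < ∞`. -/
structure IsDiniSmoothArc (γ γ' : ℝ → ℂ) (a b : ℝ) : Prop where
  lt : a < b
  inj : Set.InjOn γ (Set.Icc a b)
  deriv : ∀ s ∈ Set.Icc a b, HasDerivWithinAt γ (γ' s) (Set.Icc a b) s
  cont : ContinuousOn γ' (Set.Icc a b)
  nonzero : ∀ s ∈ Set.Icc a b, γ' s ≠ 0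
  dini : MeasureTheory.IntegrableOn (fun t => modCont γ' a b t / t) (Set.Ioc (0 : ℝ) 1)

/-- A piecewise Dini-smooth Jordan curve: a Jordan curve which is the union of finitely many
Dini-smooth arcs. -/
def IsPiecewiseDiniSmoothJordanCurve (Γ : Set ℂ) : Prop :=
  IsJordanCurve Γ ∧
    ∃ (N : ℕ) (γ γ' : Fin N → ℝ → ℂ) (a b : Fin N → ℝ),
      (∀ i, IsDiniSmoothArc (γ i) (γ' i) (a i) (b i)) ∧
      Γ = ⋃ i, γ i '' Set.Icc (a i) (b i)

/-- The unbounded connected component `Ω` of the complement of `Γ` (in the finite plane). -/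
def exteriorDomain (Γ : Set ℂ) : Set ℂ :=
  {z | z ∈ Γᶜ ∧ ¬ Bornology.IsBounded (connectedComponentIn Γᶜ z)}

/-- `φ` is the canonical exterior conformal map of `Γ` onto `{|w| > 1}` with `φ(∞) = ∞` and
`φ(z)/z → c⁻¹` as `z → ∞`; the constant `c` is then the logarithmic capacity of `Γ`. -/
structure IsExteriorMap (Γ : Set ℂ) (φ : ℂ → ℂ) (c : ℝ) : Prop where
  cpos : 0 < c
  diff : DifferentiableOn ℂ φ (exteriorDomain Γ)
  bij : Set.BijOn φ (exteriorDomain Γ) {w : ℂ | 1 < ‖w‖}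
  tendsto : Filter.Tendsto (fun z => φ z / z)
    (Bornology.cobounded ℂ ⊓ Filter.principal (exteriorDomain Γ)) (nhds ((c : ℂ)⁻¹))

/-- `F` is the `n`-th Faber polynomial of `Γ`: the unique polynomial with
`φ(z)^n − F(z) → 0` as `z → ∞` in the exterior domain. -/
def IsFaberPoly (Γ : Set ℂ) (φ : ℂ → ℂ) (n : ℕ) (F : Polynomial ℂ) : Prop :=
  Filter.Tendsto (fun z => φ z ^ n - F.eval z)
    (Bornology.cobounded ℂ ⊓ Filter.principal (exteriorDomain Γ)) (nhds 0)

/-- `ψ` is the inverse of `φ`, extended to a homeomorphism of `{|w| ≥ 1}` onto the closure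
of the exterior domain; on the unit circle it parametrizes `Γ`. -/
structure IsExteriorParam (Γ : Set ℂ) (φ ψ : ℂ → ℂ) : Prop where
  cont : ContinuousOn ψ {w : ℂ | 1 ≤ ‖w‖}
  inj : Set.InjOn ψ {w : ℂ | 1 ≤ ‖w‖}
  inv : ∀ w : ℂ, 1 < ‖w‖ → ψ w ∈ exteriorDomain Γ ∧ φ (ψ w) = w
  boundary : ∀ w : ℂ, ‖w‖ = 1 → ψ w ∈ Γ
  boundary_surj : ∀ z ∈ Γ, ∃ w : ℂ, ‖w‖ = 1 ∧ ψ w = z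

/-- `T` is the `n`-th Chebyshev polynomial of `Γ`: the monic polynomial of degree `n`
minimizing the supremum norm over `Γ`. -/
def IsChebyshevPoly (Γ : Set ℂ) (n : ℕ) (T : Polynomial ℂ) : Prop :=
  T.Monic ∧ T.natDegree = n ∧
    ∀ P : Polynomial ℂ, P.Monic → P.natDegree = n →
      supNorm Γ (fun z => T.eval z) ≤ supNorm Γ (fun z => P.eval z)

/-- `v` is a secant-argument function of `Γ = ψ(unit circle)` at `θ` (relative to `α` with
`α < θ < α + 2π`): a bounded-variation branch of `t ↦ arg (ψ(e^{it}) − ψ(e^{iθ}))` on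
`[α, α + 2π]`, continuous on `[α, θ)` and on `(θ, α + 2π]`, normalized by `v θ = v(θ+)`
and by requiring the jump `v(θ+) − v(θ−)` to lie in `[0, 2π]`. -/
structure IsSecantArg (ψ : ℂ → ℂ) (θ α : ℝ) (v : ℝ → ℝ) : Prop where
  hα : α < θ
  hθ : θ < α + 2 * Real.pi
  bv : BoundedVariationOn v (Set.Icc α (α + 2 * Real.pi))
  contBefore : ContinuousOn v (Set.Ico α θ)
  contAfter : ContinuousOn v (Set.Ioc θ (α + 2 * Real.pi))
  rightCont : ContinuousWithinAt v (Set.Ici θ) θ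
  jump_mem : ∃ L : ℝ, Filter.Tendsto v (nhdsWithin θ (Set.Iio θ)) (nhds L) ∧
    v θ - L ∈ Set.Icc 0 (2 * Real.pi)
  branch : ∀ t ∈ Set.Icc α (α + 2 * Real.pi), t ≠ θ →
    Complex.exp (Complex.I * (v t : ℂ))
      = (ψ (Complex.exp (Complex.I * (t : ℂ))) - ψ (Complex.exp (Complex.I * (θ : ℂ))))
        / ((‖ψ (Complex.exp (Complex.I * (t : ℂ))) - ψ (Complex.exp (Complex.I * (θ : ℂ)))‖ : ℂ))

/-- The exterior angle of `Γ = ψ(unit circle)` at the boundary point `ψ(e^{iθ})` equals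
`lam * π`, expressed through the jump `v(θ+) − v(θ−) = lam * π` of a secant-argument
function at `θ`. -/
def HasExteriorAngleAt (ψ : ℂ → ℂ) (θ lam : ℝ) : Prop :=
  ∃ (α : ℝ) (v : ℝ → ℝ), IsSecantArg ψ θ α v ∧
    Filter.Tendsto v (nhdsWithin θ (Set.Iio θ)) (nhds (v θ - lam * Real.pi))

/-- The set `Θ_Γ = {θ_k + 2πj}` of corner parameters modulo `2π`. -/
def cornerSet {l : ℕ} (θk : Fin l → ℝ) : Set ℝ :=
  {x | ∃ (k : Fin l) (j : ℤ), x = θk k + j * (2 * Real.pi)}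

/-- `(μp, μn)` realizes the Lebesgue–Stieltjes (signed) measure `dv` of `v` on `(α, β]`:
both are finite measures and `μp − μn` has the increments of `v`. -/
structure IsLSPair (v : ℝ → ℝ) (α β : ℝ) (μp μn : MeasureTheory.Measure ℝ) : Prop where
  finp : MeasureTheory.IsFiniteMeasure μp
  finn : MeasureTheory.IsFiniteMeasure μn
  incr : ∀ s t : ℝ, α ≤ s → s ≤ t → t ≤ β →
    (μp (Set.Ioc s t)).toReal - (μn (Set.Ioc s t)).toReal = v t - v s


section OmegaLemmas

variable {z z' : ℝ → ℂ} {a b : ℝ}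

lemma modCont_bddAbove (hunit : ∀ s ∈ Set.Icc a b, ‖z' s‖ = 1) (t : ℝ) :
    BddAbove {d : ℝ | ∃ s₁ ∈ Set.Icc a b, ∃ s₂ ∈ Set.Icc a b, |s₁ - s₂| ≤ t ∧ d = ‖z' s₁ - z' s₂‖} := by
  refine ⟨2, ?_⟩
  rintro x ⟨s₁, h₁, s₂, h₂, -, rfl⟩
  calc ‖z' s₁ - z' s₂‖ ≤ ‖z' s₁‖ + ‖z' s₂‖ := norm_sub_le _ _
  _ = 2 := by rw [hunit s₁ h₁, hunit s₂ h₂]; norm_num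

lemma modCont_spec (hunit : ∀ s ∈ Set.Icc a b, ‖z' s‖ = 1) {s₁ s₂ t : ℝ}
    (h₁ : s₁ ∈ Set.Icc a b) (h₂ : s₂ ∈ Set.Icc a b) (ht : |s₁ - s₂| ≤ t) :
    ‖z' s₁ - z' s₂‖ ≤ modCont z' a b t :=
  le_csSup (modCont_bddAbove hunit t) ⟨s₁, h₁, s₂, h₂, ht, rfl⟩

lemma modCont_nonneg (hunit : ∀ s ∈ Set.Icc a b, ‖z' s‖ = 1) (hab : a ≤ b) {t : ℝ} (ht : 0 ≤ t) :
    0 ≤ modCont z' a b t := by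
  have := modCont_spec (s₁ := a) (s₂ := a) hunit (left_mem_Icc.2 hab) (left_mem_Icc.2 hab)
    (by simpa using ht)
  simpa using this

lemma modCont_le (hunit : ∀ s ∈ Set.Icc a b, ‖z' s‖ = 1) {t C : ℝ} (hC : 0 ≤ C)
    (h : ∀ s₁ ∈ Set.Icc a b, ∀ s₂ ∈ Set.Icc a b, |s₁ - s₂| ≤ t → ‖z' s₁ - z' s₂‖ ≤ C) :
    modCont z' a b t ≤ C := by
  apply Real.sSup_le _ hC
  rintro x ⟨s₁, h₁, s₂, h₂, ht, rfl⟩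
  exact h s₁ h₁ s₂ h₂ ht

lemma modCont_mono (hunit : ∀ s ∈ Set.Icc a b, ‖z' s‖ = 1) (hab : a ≤ b) :
    Monotone (modCont z' a b) := by
  intro t₁ t₂ h
  rcases le_or_gt 0 t₂ with h2 | h2
  · apply Real.sSup_le _ (modCont_nonneg hunit hab h2)
    rintro x ⟨s₁, h₁, s₂, hs₂, ht, rfl⟩
    exact modCont_spec hunit h₁ hs₂ (ht.trans h)
  · have e : ∀ t : ℝ, t < 0 → modCont z' a b t = 0 := by
      intro t ht
      have : {d : ℝ | ∃ s₁ ∈ Set.Icc a b, ∃ s₂ ∈ Set.Icc a b, |s₁ - s₂| ≤ t ∧ d = ‖z' s₁ - z' s₂‖} = ∅ := by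
        ext x; simp only [Set.mem_setOf_eq, Set.mem_empty_iff_false, iff_false]
        rintro ⟨s₁, -, s₂, -, hle, -⟩
        exact absurd (le_trans (abs_nonneg _) hle) (not_le.2 ht)
      rw [modCont, this, Real.sSup_empty]
    rw [e t₁ (lt_of_le_of_lt h h2), e t₂ h2]

lemma modCont_measurable : Monotone (modCont z' a b) → Measurable (modCont z' a b) :=
  Monotone.measurable

end OmegaLemmas

section FTC

variable {z z' : ℝ → ℂ} {a b : ℝ}

lemma cont_z (harc : IsDiniSmoothArc z z' a b) : ContinuousOn z (Set.Icc a b) :=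
  fun s hs => (harc.deriv s hs).continuousWithinAt

lemma ftc_z (harc : IsDiniSmoothArc z z' a b) {p q : ℝ} (hp : p ∈ Set.Icc a b)
    (hq : q ∈ Set.Icc a b) : ∫ t in p..q, z' t = z q - z p := by
  have key : ∀ p q : ℝ, p ∈ Set.Icc a b → q ∈ Set.Icc a b → p ≤ q →
      ∫ t in p..q, z' t = z q - z p := by
    intro p q hp hq hpq
    apply intervalIntegral.integral_eq_sub_of_hasDeriv_right_of_le hpq
    · exact (cont_z harc).mono (Set.Icc_subset_Icc hp.1 hq.2)
    · intro x hx
      have hxab : x ∈ Set.Ioo a b := ⟨lt_of_le_of_lt hp.1 hx.1, lt_of_lt_of_le hx.2 hq.2⟩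
      exact ((harc.deriv x ⟨hxab.1.le, hxab.2.le⟩).hasDerivAt
        (Icc_mem_nhds hxab.1 hxab.2)).hasDerivWithinAt
    · have : ContinuousOn z' (Set.uIcc p q) := harc.cont.mono
        (by rw [Set.uIcc_of_le hpq]; exact Set.Icc_subset_Icc hp.1 hq.2)
      exact this.intervalIntegrable
  rcases le_total p q with h | h
  · exact key p q hp hq h
  · rw [intervalIntegral.integral_symm, key q p hq hp h]; ring

lemma Ebound (harc : IsDiniSmoothArc z z' a b) (hunit : ∀ s ∈ Set.Icc a b, ‖z' s‖ = 1)
    {p q : ℝ} (hp : p ∈ Set.Icc a b) (hq : q ∈ Set.Icc a b) :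
    ‖((q - p : ℝ) : ℂ) * z' q - (z q - z p)‖ ≤ modCont z' a b |q - p| * |q - p| := by
  have hint : IntervalIntegrable z' volume p q := by
    have : ContinuousOn z' (Set.uIcc p q) := harc.cont.mono
      (Set.uIcc_subset_Icc hp hq)
    exact this.intervalIntegrable
  have h1 : z q - z p = ∫ t in p..q, z' t := (ftc_z harc hp hq).symm
  have h2 : ((q - p : ℝ) : ℂ) * z' q = ∫ _t in p..q, z' q := by
    rw [intervalIntegral.integral_const, Complex.real_smul]
  rw [h1, h2, ← intervalIntegral.integral_sub (intervalIntegrable_const) hint]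
  have hC : ∀ x ∈ Set.uIoc p q, ‖z' q - z' x‖ ≤ modCont z' a b |q - p| := by
    intro x hx
    have hx' : x ∈ Set.Icc a b := Set.uIcc_subset_Icc hp hq (Set.Ioc_subset_Icc_self hx)
    have habs : |q - x| ≤ |q - p| := by
      rcases le_total p q with h | h
      · rw [Set.uIoc_of_le h] at hx
        rw [abs_of_nonneg (by linarith [hx.2]), abs_of_nonneg (by linarith [hp.1, hq.1])]
        linarith [hx.1]
      · rw [Set.uIoc_of_ge h] at hx
        rw [abs_of_nonpos (by linarith [hx.1]), abs_of_nonpos (by linarith)]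
        linarith [hx.2]
    exact le_trans (modCont_spec hunit hq hx' le_rfl) (modCont_mono hunit harc.lt.le habs)
  exact intervalIntegral.norm_integral_le_of_norm_le_const hC

end FTC


lemma var_le (A : ℝ → ℝ) (s : Set ℝ) (g : ℝ → ℝ) (K : ℝ)
    (hint : ∀ u v : ℝ, u ∈ s → v ∈ s → u ≤ v → IntervalIntegrable g volume u v)
    (hbound : ∀ u v : ℝ, u ∈ s → v ∈ s → u ≤ v → |A v - A u| ≤ ∫ x in u..v, g x)
    (hK : ∀ u v : ℝ, u ∈ s → v ∈ s → u ≤ v → (∫ x in u..v, g x) ≤ K) :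
    eVariationOn A s ≤ ENNReal.ofReal K := by
  apply iSup_le
  rintro ⟨n, u, hu, us⟩
  have key : ∀ m : ℕ, ∑ i ∈ Finset.range m, |A (u (i + 1)) - A (u i)| ≤ ∫ x in (u 0)..(u m), g x := by
    intro m
    induction m with
    | zero => simp
    | succ m ih =>
      rw [Finset.sum_range_succ,
        ← intervalIntegral.integral_add_adjacent_intervals
          (hint (u 0) (u m) (us 0) (us m) (hu (Nat.zero_le m)))
          (hint (u m) (u (m + 1)) (us m) (us (m + 1)) (hu (Nat.le_succ m)))]
      exact add_le_add ih (hbound (u m) (u (m + 1)) (us m) (us (m + 1)) (hu (Nat.le_succ m)))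
  have key2 : ∑ i ∈ Finset.range n, |A (u (i + 1)) - A (u i)| ≤ K :=
    (key n).trans (hK (u 0) (u n) (us 0) (us n) (hu (Nat.zero_le n)))
  calc ∑ i ∈ Finset.range n, edist (A (u (i + 1))) (A (u i))
      = ENNReal.ofReal (∑ i ∈ Finset.range n, |A (u (i + 1)) - A (u i)|) := by
        rw [ENNReal.ofReal_sum_of_nonneg (fun i _ => abs_nonneg _)]
        refine Finset.sum_congr rfl fun i _ => ?_
        rw [edist_dist, Real.dist_eq]
    _ ≤ ENNReal.ofReal K := ENNReal.ofReal_le_ofReal key2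

lemma ball_subset_slitPlane : Metric.ball (1 : ℂ) 1 ⊆ Complex.slitPlane := by
  intro x hx
  rw [Complex.mem_slitPlane_iff]
  left
  have h : ‖x - 1‖ < 1 := by
    simpa [Complex.dist_eq] using hx
  have h2 : |(x - 1).re| ≤ ‖x - 1‖ := Complex.abs_re_le_norm _
  have h3 : (x - 1).re = x.re - 1 := by simp
  have := abs_le.1 h2
  linarith [this.1]

lemma incr_bound (z z' : ℝ → ℂ) (a b s₀ : ℝ) (A : ℝ → ℝ) (u v : ℝ)
    (harc : IsDiniSmoothArc z z' a b)
    (huv : u ≤ v)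
    (hsub : Set.Icc u v ⊆ Set.Icc a b)
    (hIoo : Set.Ioo u v ⊆ Set.Ioo a b)
    (hne : ∀ x ∈ Set.Icc u v, x ≠ s₀)
    (hDlow : ∀ x ∈ Set.Icc u v, |x - s₀| / 2 ≤ ‖z x - z s₀‖)
    (g : ℝ → ℝ)
    (hg_int : IntervalIntegrable g volume u v)
    (hφg : ∀ x ∈ Set.Icc u v, |(z' x / (z x - z s₀)).im| ≤ g x)
    (hcontA : ContinuousOn A (Set.Icc u v))
    (hbranch : ∀ s ∈ Set.Icc u v, Complex.exp (Complex.I * (A s : ℂ))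
        = (z s - z s₀) / ((‖z s - z s₀‖ : ℝ) : ℂ)) :
    |A v - A u| ≤ ∫ x in u..v, g x := by
  set φ : ℝ → ℝ := fun x => (z' x / (z x - z s₀)).im with hφdef
  have hDne : ∀ x ∈ Set.Icc u v, z x - z s₀ ≠ 0 := by
    intro x hx
    have h1 : (0 : ℝ) < |x - s₀| := abs_pos.2 (sub_ne_zero.2 (hne x hx))
    have := hDlow x hx
    rw [← norm_pos_iff]
    linarith
  have hzc : ContinuousOn z (Set.Icc u v) := (cont_z harc).mono hsub
  have hz'c : ContinuousOn z' (Set.Icc u v) := harc.cont.mono hsub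
  have hφcont : ContinuousOn φ (Set.Icc u v) := by
    apply Complex.continuous_im.comp_continuousOn
    exact hz'c.div (hzc.sub continuousOn_const) hDne
  -- key derivative step
  have hderiv : ∀ t ∈ Set.Ioo u v, HasDerivAt A (φ t) t := by
    intro t ht
    have htuv : t ∈ Set.Icc u v := Set.Ioo_subset_Icc_self ht
    have htab : t ∈ Set.Ioo a b := hIoo ht
    have hzt : HasDerivAt z (z' t) t :=
      (harc.deriv t ⟨htab.1.le, htab.2.le⟩).hasDerivAt (Icc_mem_nhds htab.1 htab.2)
    set Dt : ℂ := z t - z s₀ with hDtdef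
    have hDt : Dt ≠ 0 := hDne t htuv
    set w : ℝ → ℂ := fun s => (z s - z s₀) / Dt with hwdef
    have hw : HasDerivAt w (z' t / Dt) t := (hzt.sub_const (z s₀)).div_const Dt
    have hwt : w t = 1 := div_self hDt
    have hwc : ContinuousOn w (Set.Ioo u v) :=
      (((cont_z harc).mono (Set.Ioo_subset_Icc_self.trans hsub)).sub continuousOn_const).div_const Dt
    set N₀ : Set ℝ := Set.Ioo u v ∩ w ⁻¹' (Metric.ball 1 1) with hN₀def
    have hN₀o : IsOpen N₀ := hwc.isOpen_inter_preimage isOpen_Ioo Metric.isOpen_ball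
    have htN₀ : t ∈ N₀ := ⟨ht, by simp [Metric.mem_ball, hwt]⟩
    obtain ⟨ε, hε, hball⟩ := Metric.isOpen_iff.1 hN₀o t htN₀
    set N : Set ℝ := Set.Ioo (t - ε) (t + ε) with hNdef
    have hNsub : N ⊆ N₀ := by rw [hNdef, ← Real.ball_eq_Ioo]; exact hball
    have htN : t ∈ N := by constructor <;> simp <;> linarith
    set B : ℝ → ℝ := fun s => A t + (Complex.log (w s)).im with hBdef
    -- derivative of B
    have hlog : HasDerivAt Complex.log (w t)⁻¹ (w t) :=
      Complex.hasDerivAt_log (by rw [hwt]; exact Complex.one_mem_slitPlane)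
    have hlw : HasDerivAt (fun s => Complex.log (w s)) (z' t / Dt) t := by
      have := HasDerivAt.comp t hlog hw
      rw [hwt, inv_one, one_mul] at this
      exact this
    have him : HasDerivAt (fun s => (Complex.log (w s)).im) ((z' t / Dt).im) t := by
      have := (Complex.imCLM.hasFDerivAt
        (x := Complex.log (w t))).comp_hasDerivAt t hlw
      exact this
    have hB : HasDerivAt B (φ t) t := by
      have := him.const_add (A t)
      simpa [hBdef, hφdef, hDtdef] using this
    -- exp identity for B
    have hexpB : ∀ s ∈ N, Complex.exp (Complex.I * ((B s : ℝ) : ℂ))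
        = (z s - z s₀) / ((‖z s - z s₀‖ : ℝ) : ℂ) := by
      intro s hsN
      have hsN₀ : s ∈ N₀ := hNsub hsN
      have hsuv : s ∈ Set.Icc u v := Set.Ioo_subset_Icc_self hsN₀.1
      have hwball : w s ∈ Metric.ball (1 : ℂ) 1 := hsN₀.2
      have hws_ne : w s ≠ 0 := by
        intro h
        rw [h] at hwball
        simp [Metric.mem_ball, dist_eq_norm] at hwball
      set L : ℂ := Complex.log (w s) with hLdef
      have hexpL : Complex.exp L = w s := Complex.exp_log hws_ne
      have habsw : ‖w s‖ = Real.exp L.re := by rw [← hexpL, Complex.norm_exp]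
      have key : Complex.exp (Complex.I * (L.im : ℂ)) = w s / ((‖w s‖ : ℝ) : ℂ) := by
        have h1 : Complex.I * (L.im : ℂ) = L - (L.re : ℂ) := by
          linear_combination (Complex.re_add_im L)
        rw [h1, Complex.exp_sub, hexpL, habsw, Complex.ofReal_exp]
      have hDs_ne : z s - z s₀ ≠ 0 := hDne s hsuv
      have hBs : ((B s : ℝ) : ℂ) = ((A t : ℝ) : ℂ) + ((L.im : ℝ) : ℂ) := by
        rw [hBdef]; push_cast; ring
      rw [hBs, mul_add, Complex.exp_add, hbranch t htuv, key]
      have hws : w s = (z s - z s₀) / Dt := rfl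
      have hnw : ‖w s‖ = ‖z s - z s₀‖ / ‖Dt‖ := by
        rw [hws, norm_div]
      have h1 : ((‖Dt‖ : ℝ) : ℂ) ≠ 0 := by
        exact_mod_cast norm_ne_zero_iff.2 hDt
      have h2 : ((‖z s - z s₀‖ : ℝ) : ℂ) ≠ 0 := by
        exact_mod_cast norm_ne_zero_iff.2 hDs_ne
      rw [hws, hnw, Complex.ofReal_div]
      rw [div_div_div_eq]
      rw [div_mul_div_comm]
      rw [div_eq_div_iff (by exact mul_ne_zero h1 (mul_ne_zero hDt h2)) h2]
      ring
    -- A = B on N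
    have hkZ : ∀ s ∈ N, ∃ m : ℤ, A s - B s = m * (2 * Real.pi) := by
      intro s hsN
      have hsuv : s ∈ Set.Icc u v := Set.Ioo_subset_Icc_self (hNsub hsN).1
      have hden : (z s - z s₀) / ((‖z s - z s₀‖ : ℝ) : ℂ) ≠ 0 :=
        div_ne_zero (hDne s hsuv) (by exact_mod_cast norm_ne_zero_iff.2 (hDne s hsuv))
      have h3 : Complex.exp (Complex.I * ((A s : ℝ) : ℂ) - Complex.I * ((B s : ℝ) : ℂ)) = 1 := by
        rw [Complex.exp_sub, hbranch s hsuv, hexpB s hsN, div_self hden]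
      rw [Complex.exp_eq_one_iff] at h3
      obtain ⟨m, hm⟩ := h3
      refine ⟨m, ?_⟩
      have hC : ((A s - B s : ℝ) : ℂ) = (((m : ℝ) * (2 * Real.pi) : ℝ) : ℂ) := by
        apply mul_left_cancel₀ Complex.I_ne_zero
        push_cast
        linear_combination hm
      exact_mod_cast hC
    have hAB : ∀ s ∈ N, A s = B s := by
      intro s hsN
      obtain ⟨m, hm⟩ := hkZ s hsN
      by_contra hne'
      have hm0 : m ≠ 0 := by
        intro h
        rw [h] at hm
        simp at hm
        exact hne' (sub_eq_zero.1 hm)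
      have hkt : A t - B t = 0 := by
        simp [hBdef, hwt, Complex.log_one]
      have hNIoo : N ⊆ Set.Ioo u v := fun x hx => (hNsub hx).1
      have hcontk : ContinuousOn (fun x => A x - B x) N := by
        apply ContinuousOn.sub
        · exact hcontA.mono (hNIoo.trans Set.Ioo_subset_Icc_self)
        · apply ContinuousOn.add continuousOn_const
          apply Complex.continuous_im.comp_continuousOn
          apply ContinuousOn.clog (hwc.mono hNIoo)
          intro x hx
          exact ball_subset_slitPlane (hNsub hx).2
      have hNord : Set.uIcc t s ⊆ N := Set.ordConnected_Ioo.uIcc_subset htN hsN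
      have hIVT := intermediate_value_uIcc (hcontk.mono hNord)
      have habs : ∀ x ∈ Set.uIcc t s, ∀ m' : ℤ, A x - B x ≠ Real.pi ∧ A x - B x ≠ -Real.pi := by
        intro x hx m'
        obtain ⟨m', hm'⟩ := hkZ x (hNord hx)
        constructor <;> intro hcon <;> rw [hcon] at hm'
        · have h2 : (2 * m' - 1 : ℝ) * Real.pi = 0 := by push_cast; linarith
          rcases mul_eq_zero.1 h2 with h | h
          · have : (2 * m' - 1 : ℤ) = 0 := by exact_mod_cast h
            omega
          · exact Real.pi_ne_zero h
        · have h2 : (2 * m' + 1 : ℝ) * Real.pi = 0 := by push_cast; linarith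
          rcases mul_eq_zero.1 h2 with h | h
          · have : (2 * m' + 1 : ℤ) = 0 := by exact_mod_cast h
            omega
          · exact Real.pi_ne_zero h
      have hpi := Real.pi_pos
      rcases lt_or_lt_iff_ne.2 hm0 with hm1 | hm1
      · -- m ≤ -1 : use -π
        have hmem : -Real.pi ∈ Set.uIcc ((fun x => A x - B x) t) ((fun x => A x - B x) s) := by
          simp only [hkt, hm]
          have hmle : (m : ℝ) ≤ -1 := by
            have : m ≤ -1 := by omega
            exact_mod_cast this
          rw [Set.mem_uIcc]
          right
          constructor
          · nlinarith [hmle]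
          · linarith
        obtain ⟨x, hx, hfx⟩ := hIVT hmem
        exact (habs x hx 0).2 hfx
      · -- 1 ≤ m : use π
        have hmem : Real.pi ∈ Set.uIcc ((fun x => A x - B x) t) ((fun x => A x - B x) s) := by
          simp only [hkt, hm]
          have hmge : (1 : ℝ) ≤ (m : ℝ) := by exact_mod_cast hm1
          rw [Set.mem_uIcc]
          left
          constructor
          · linarith
          · nlinarith [hmge]
        obtain ⟨x, hx, hfx⟩ := hIVT hmem
        exact (habs x hx 0).1 hfx
    have hevent : A =ᶠ[nhds t] B :=
      Filter.eventuallyEq_of_mem (Ioo_mem_nhds htN.1 htN.2) hAB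
    exact hB.congr_of_eventuallyEq hevent
  -- FTC and comparison
  have hφint : IntervalIntegrable φ volume u v := by
    have : ContinuousOn φ (Set.uIcc u v) := by
      rw [Set.uIcc_of_le huv]; exact hφcont
    exact this.intervalIntegrable
  have hftc : ∫ x in u..v, φ x = A v - A u :=
    intervalIntegral.integral_eq_sub_of_hasDeriv_right_of_le huv hcontA
      (fun x hx => (hderiv x hx).hasDerivWithinAt) hφint
  calc |A v - A u| = ‖∫ x in u..v, φ x‖ := by rw [hftc]; exact (Real.norm_eq_abs _).symm
    _ ≤ ∫ x in u..v, ‖φ x‖ := intervalIntegral.norm_integral_le_integral_norm huv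
    _ ≤ ∫ x in u..v, g x := by
        apply intervalIntegral.integral_mono_on huv hφint.norm hg_int
        intro x hx
        rw [Real.norm_eq_abs]
        exact hφg x hx

/-- **Gaier.** Let `z : [a,b] → ℂ` be an arc-length parametrization
(`|z'(s)| = 1`) of a Dini-smooth Jordan arc, with modulus of continuity `ω = modCont z' a b`.
There exists `δ > 0` such that for every interval `I = [c, d] ⊆ [a, b]` of length `< δ` and
every `s₀ ∈ I`, every continuous branch `A` of `s ↦ arg (z(s) − z(s₀))` on `I ∖ {s₀}` has
total variation (summed over the two components of `I ∖ {s₀}`) at most `8 ∫₀^δ ω(t)/t dt`. -/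
theorem dini_arc_local_argument_variation
    (z z' : ℝ → ℂ) (a b : ℝ)
    (harc : IsDiniSmoothArc z z' a b)
    (hunit : ∀ s ∈ Set.Icc a b, ‖z' s‖ = 1) :
    ∃ δ : ℝ, 0 < δ ∧
      ∀ c d : ℝ, Set.Icc c d ⊆ Set.Icc a b → d - c < δ →
        ∀ s₀ ∈ Set.Icc c d, ∀ A : ℝ → ℝ,
          ContinuousOn A (Set.Icc c d \ {s₀}) →
          (∀ s ∈ Set.Icc c d \ {s₀},
            Complex.exp (Complex.I * (A s : ℂ))
              = (z s - z s₀) / ((‖z s - z s₀‖ : ℝ) : ℂ)) →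
          eVariationOn A (Set.Ico c s₀) + eVariationOn A (Set.Ioc s₀ d)
            ≤ ENNReal.ofReal (8 * ∫ t in Set.Ioc (0 : ℝ) δ, modCont z' a b t / t) := by
  have hab : a ≤ b := harc.lt.le
  -- uniform continuity of z'
  obtain ⟨δ₀, hδ₀pos, hδ₀⟩ := Metric.uniformContinuousOn_iff.1
    (isCompact_Icc.uniformContinuousOn_of_continuous harc.cont) (1/2) (by norm_num)
  have ωhalf : ∀ t : ℝ, t < δ₀ → modCont z' a b t ≤ 1/2 := by
    intro t ht
    apply modCont_le hunit (by norm_num)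
    intro s₁ h₁ s₂ h₂ hle
    have := hδ₀ s₁ h₁ s₂ h₂ (by rw [Real.dist_eq]; exact lt_of_le_of_lt hle ht)
    rw [dist_eq_norm] at this
    linarith
  have ωle2 : ∀ t : ℝ, modCont z' a b t ≤ 2 := by
    intro t
    apply modCont_le hunit (by norm_num)
    intro s₁ h₁ s₂ h₂ _
    calc ‖z' s₁ - z' s₂‖ ≤ ‖z' s₁‖ + ‖z' s₂‖ := norm_sub_le _ _
      _ = 2 := by rw [hunit s₁ h₁, hunit s₂ h₂]; norm_num
  have hωmono : Monotone (modCont z' a b) := modCont_mono hunit hab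
  set δ : ℝ := min δ₀ 1 with hδdef
  have hδpos : 0 < δ := lt_min hδ₀pos one_pos
  have hδδ₀ : δ ≤ δ₀ := min_le_left _ _
  refine ⟨δ, hδpos, ?_⟩
  intro c d hsubcd hlen s₀ hs₀ A hA hbr
  have hcd : c ≤ d := hs₀.1.trans hs₀.2
  have hac : a ≤ c := (hsubcd (left_mem_Icc.2 hcd)).1
  have hdb : d ≤ b := (hsubcd (right_mem_Icc.2 hcd)).2
  have hs₀ab : s₀ ∈ Set.Icc a b := hsubcd hs₀
  have hInt : IntegrableOn (fun t => modCont z' a b t / t) (Set.Ioc 0 δ) :=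
    harc.dini.mono_set (Set.Ioc_subset_Ioc_right (min_le_right _ _))
  have hI0 : 0 ≤ ∫ t in Set.Ioc (0:ℝ) δ, modCont z' a b t / t :=
    setIntegral_nonneg measurableSet_Ioc
      (fun t ht => div_nonneg (modCont_nonneg hunit hab ht.1.le) ht.1.le)
  set K : ℝ := 2 * ∫ t in Set.Ioc (0:ℝ) δ, modCont z' a b t / t with hKdef
  have hK0 : 0 ≤ K := by positivity
  set g : ℝ → ℝ := fun x => 2 * (modCont z' a b |x - s₀| / |x - s₀|) with hgdef
  -- pointwise facts
  have F1 : ∀ x ∈ Set.Icc c d, x ≠ s₀ →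
      |x - s₀| / 2 ≤ ‖z x - z s₀‖ ∧ |(z' x / (z x - z s₀)).im| ≤ g x := by
    intro x hx hxne
    have hxab : x ∈ Set.Icc a b := hsubcd hx
    have hr : |x - s₀| ≤ d - c := by
      rw [abs_le]
      constructor
      · linarith [hx.1, hs₀.2]
      · linarith [hx.2, hs₀.1]
    have hrδ : |x - s₀| < δ₀ := lt_of_le_of_lt hr (lt_of_lt_of_le hlen hδδ₀)
    have homega : modCont z' a b |x - s₀| ≤ 1/2 := ωhalf _ hrδ
    have hω0 : 0 ≤ modCont z' a b |x - s₀| := modCont_nonneg hunit hab (abs_nonneg _)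
    have hE := Ebound harc hunit hs₀ab hxab
    have hrpos : 0 < |x - s₀| := abs_pos.2 (sub_ne_zero.2 hxne)
    have hnormr : ‖((x - s₀ : ℝ) : ℂ) * z' x‖ = |x - s₀| := by
      rw [norm_mul, Complex.norm_real, hunit x hxab, mul_one, Real.norm_eq_abs]
    have hlow : |x - s₀| / 2 ≤ ‖z x - z s₀‖ := by
      have h1 : ‖((x - s₀ : ℝ) : ℂ) * z' x‖ - ‖((x - s₀ : ℝ) : ℂ) * z' x - (z x - z s₀)‖
          ≤ ‖z x - z s₀‖ := by
        have h2 := norm_sub_norm_le (((x - s₀ : ℝ) : ℂ) * z' x)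
          (((x - s₀ : ℝ) : ℂ) * z' x - (z x - z s₀))
        simpa using h2
      have h3 : modCont z' a b |x - s₀| * |x - s₀| ≤ (1/2) * |x - s₀| :=
        mul_le_mul_of_nonneg_right homega hrpos.le
      rw [hnormr] at h1
      linarith
    refine ⟨hlow, ?_⟩
    have hDne : z x - z s₀ ≠ 0 := by
      rw [← norm_pos_iff]; linarith
    have hr0 : ((x - s₀ : ℝ) : ℂ) ≠ 0 := by
      exact_mod_cast sub_ne_zero.2 hxne
    have hsplit : z' x / (z x - z s₀)
        = (((x - s₀ : ℝ) : ℂ) * z' x - (z x - z s₀)) / (((x - s₀ : ℝ) : ℂ) * (z x - z s₀))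
          + (((x - s₀ : ℝ) : ℂ))⁻¹ := by
      have halg : ∀ r w D : ℂ, r ≠ 0 → D ≠ 0 → w / D = (r * w - D) / (r * D) + r⁻¹ := by
        intro r w D hr hD
        field_simp
        ring
      exact halg _ _ _ hr0 hDne
    have him : (z' x / (z x - z s₀)).im
        = ((((x - s₀ : ℝ) : ℂ) * z' x - (z x - z s₀)) / (((x - s₀ : ℝ) : ℂ) * (z x - z s₀))).im := by
      rw [hsplit, Complex.add_im, ← Complex.ofReal_inv, Complex.ofReal_im, add_zero]
    have hub : |(z' x / (z x - z s₀)).im|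
        ≤ ‖((x - s₀ : ℝ) : ℂ) * z' x - (z x - z s₀)‖ / (|x - s₀| * ‖z x - z s₀‖) := by
      rw [him]
      refine le_trans (Complex.abs_im_le_norm _) ?_
      rw [norm_div, norm_mul, Complex.norm_real, Real.norm_eq_abs]
    have hd1 : (0:ℝ) < |x - s₀| * (|x - s₀| / 2) := by positivity
    have hd2 : |x - s₀| * (|x - s₀| / 2) ≤ |x - s₀| * ‖z x - z s₀‖ :=
      mul_le_mul_of_nonneg_left hlow hrpos.le
    calc |(z' x / (z x - z s₀)).im|
        ≤ ‖((x - s₀ : ℝ) : ℂ) * z' x - (z x - z s₀)‖ / (|x - s₀| * ‖z x - z s₀‖) := hub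
      _ ≤ (modCont z' a b |x - s₀| * |x - s₀|) / (|x - s₀| * (|x - s₀| / 2)) :=
          div_le_div₀ (by positivity) hE hd1 hd2
      _ = g x := by
          rw [hgdef]
          have halg : ∀ R w : ℝ, R ≠ 0 → (w * R) / (R * (R/2)) = 2 * (w / R) := by
            intro R w hR
            field_simp
          exact halg _ _ hrpos.ne'
  -- measurability of g
  have hgm : Measurable g := by
    have h1 : Measurable fun x : ℝ => |x - s₀| :=
      (continuous_abs.comp (continuous_id.sub continuous_const)).measurable
    exact ((hωmono.measurable.comp h1).div h1).const_mul 2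
  have hgnn : ∀ x : ℝ, 0 ≤ g x := by
    intro x
    have := modCont_nonneg hunit hab (abs_nonneg (x - s₀))
    positivity
  -- interval integrability of g on each side
  have hint : ∀ u v : ℝ, u ≤ v → (0 < u - s₀ ∨ 0 < s₀ - v) →
      IntervalIntegrable g volume u v := by
    intro u v huv hpos
    rw [intervalIntegrable_iff, Set.uIoc_of_le huv]
    set m : ℝ := if 0 < u - s₀ then u - s₀ else s₀ - v with hm
    have hmpos : 0 < m := by
      rw [hm]; split_ifs with h
      · exact h
      · exact hpos.resolve_left h
    have hmle : ∀ x ∈ Set.Icc u v, m ≤ |x - s₀| := by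
      intro x hx
      rw [hm]; split_ifs with h
      · rw [abs_of_pos (by linarith [hx.1])]
        linarith [hx.1]
      · have hv : 0 < s₀ - v := hpos.resolve_left h
        rw [abs_of_neg (by linarith [hx.2])]
        linarith [hx.2]
    apply Measure.integrableOn_of_bounded (M := 4 / m) measure_Ioc_lt_top.ne
      hgm.aestronglyMeasurable
    rw [ae_restrict_iff' measurableSet_Ioc]
    apply ae_of_all
    intro x hx
    have hx' : x ∈ Set.Icc u v := Set.Ioc_subset_Icc_self hx
    have h1 : m ≤ |x - s₀| := hmle x hx'
    rw [Real.norm_eq_abs, abs_of_nonneg (hgnn x), hgdef]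
    have h2 : modCont z' a b |x - s₀| / |x - s₀| ≤ 2 / m :=
      div_le_div₀ (by norm_num) (ωle2 _) hmpos h1
    calc 2 * (modCont z' a b |x - s₀| / |x - s₀|) ≤ 2 * (2 / m) := by linarith
      _ = 4 / m := by ring
  -- nonnegativity of h on Ioc 0 δ (for setIntegral_mono_set)
  have hhnn : 0 ≤ᶠ[ae (volume.restrict (Set.Ioc (0:ℝ) δ))]
      fun t => 2 * (modCont z' a b t / t) := by
    rw [Filter.EventuallyLE, ae_restrict_iff' measurableSet_Ioc]
    apply ae_of_all
    intro t ht
    have := modCont_nonneg hunit hab ht.1.le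
    have := ht.1
    positivity
  have hInt2 : IntegrableOn (fun t => 2 * (modCont z' a b t / t)) (Set.Ioc 0 δ) :=
    hInt.const_mul 2
  -- the integral comparison
  have hcomp : ∀ p q : ℝ, 0 ≤ p → p ≤ q → q ≤ δ →
      (∫ x in Set.Ioc p q, 2 * (modCont z' a b x / x)) ≤ K := by
    intro p q hp hpq hq
    have h1 : (∫ x in Set.Ioc p q, 2 * (modCont z' a b x / x))
        ≤ ∫ x in Set.Ioc (0:ℝ) δ, 2 * (modCont z' a b x / x) :=
      setIntegral_mono_set hInt2 hhnn
        (HasSubset.Subset.eventuallyLE (Set.Ioc_subset_Ioc hp hq))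
    rw [hKdef, ← integral_const_mul]
    exact h1
  -- bound for the right side Ioc s₀ d
  have hvarR : eVariationOn A (Set.Ioc s₀ d) ≤ ENNReal.ofReal K := by
    apply var_le A _ g K
    · -- integrability
      intro u v hu hv huv
      exact hint u v huv (Or.inl (by linarith [hu.1]))
    · -- increment bound
      intro u v hu hv huv
      have hIccsub : Set.Icc u v ⊆ Set.Icc c d \ {s₀} := by
        intro x hx
        refine ⟨⟨by linarith [hx.1, hu.1, hs₀.1], by linarith [hx.2, hv.2]⟩, ?_⟩
        simp only [Set.mem_singleton_iff]
        intro h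
        rw [h] at hx
        linarith [hx.1, hu.1]
      apply incr_bound z z' a b s₀ A u v harc huv
      · exact Set.Icc_subset_Icc (by linarith [hu.1, hs₀.1]) (by linarith [hv.2])
      · intro x hx
        exact ⟨by linarith [hx.1, hu.1, hs₀.1], by linarith [hx.2, hv.2]⟩
      · intro x hx
        intro h; rw [h] at hx; linarith [hx.1, hu.1]
      · intro x hx
        exact (F1 x (hIccsub hx).1 (by simpa using (hIccsub hx).2)).1
      · exact hint u v huv (Or.inl (by linarith [hu.1]))
      · intro x hx
        exact (F1 x (hIccsub hx).1 (by simpa using (hIccsub hx).2)).2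
      · exact hA.mono hIccsub
      · intro x hx
        exact hbr x (hIccsub hx)
    · -- integral bound
      intro u v hu hv huv
      have hucongr : ∫ x in u..v, g x
          = ∫ x in (u - s₀)..(v - s₀), 2 * (modCont z' a b x / x) := by
        rw [← intervalIntegral.integral_comp_sub_right (fun t => 2 * (modCont z' a b t / t)) s₀]
        apply intervalIntegral.integral_congr
        intro x hx
        rw [Set.uIcc_of_le huv] at hx
        have hxs : 0 < x - s₀ := by linarith [hx.1, hu.1]
        simp only [hgdef, abs_of_pos hxs]
      rw [hucongr, intervalIntegral.integral_of_le (by linarith)]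
      exact hcomp (u - s₀) (v - s₀) (by linarith [hu.1]) (by linarith)
        (by linarith [hv.2, hs₀.1, hlen])
  -- bound for the left side Ico c s₀
  have hvarL : eVariationOn A (Set.Ico c s₀) ≤ ENNReal.ofReal K := by
    apply var_le A _ g K
    · intro u v hu hv huv
      exact hint u v huv (Or.inr (by linarith [hv.2]))
    · intro u v hu hv huv
      have hIccsub : Set.Icc u v ⊆ Set.Icc c d \ {s₀} := by
        intro x hx
        refine ⟨⟨by linarith [hx.1, hu.1], by linarith [hx.2, hv.2, hs₀.2]⟩, ?_⟩
        simp only [Set.mem_singleton_iff]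
        intro h
        rw [h] at hx
        linarith [hx.2, hv.2]
      apply incr_bound z z' a b s₀ A u v harc huv
      · exact Set.Icc_subset_Icc (by linarith [hu.1]) (by linarith [hv.2, hs₀.2])
      · intro x hx
        exact ⟨by linarith [hx.1, hu.1], by linarith [hx.2, hv.2, hs₀.2]⟩
      · intro x hx
        intro h; rw [h] at hx; linarith [hx.2, hv.2]
      · intro x hx
        exact (F1 x (hIccsub hx).1 (by simpa using (hIccsub hx).2)).1
      · exact hint u v huv (Or.inr (by linarith [hv.2]))
      · intro x hx
        exact (F1 x (hIccsub hx).1 (by simpa using (hIccsub hx).2)).2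
      · exact hA.mono hIccsub
      · intro x hx
        exact hbr x (hIccsub hx)
    · intro u v hu hv huv
      have hucongr : ∫ x in u..v, g x
          = ∫ x in (s₀ - v)..(s₀ - u), 2 * (modCont z' a b x / x) := by
        rw [← intervalIntegral.integral_comp_sub_left (fun t => 2 * (modCont z' a b t / t)) s₀]
        apply intervalIntegral.integral_congr
        intro x hx
        rw [Set.uIcc_of_le huv] at hx
        have hxs : x - s₀ < 0 := by linarith [hx.2, hv.2]
        simp only [hgdef, abs_of_neg hxs]
        rw [neg_sub]
      rw [hucongr, intervalIntegral.integral_of_le (by linarith)]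
      exact hcomp (s₀ - v) (s₀ - u) (by linarith [hv.2]) (by linarith)
        (by linarith [hu.1, hs₀.2, hlen])
  -- combine
  calc eVariationOn A (Set.Ico c s₀) + eVariationOn A (Set.Ioc s₀ d)
      ≤ ENNReal.ofReal K + ENNReal.ofReal K := add_le_add hvarL hvarR
    _ = ENNReal.ofReal (K + K) := (ENNReal.ofReal_add hK0 hK0).symm
    _ ≤ ENNReal.ofReal (8 * ∫ t in Set.Ioc (0 : ℝ) δ, modCont z' a b t / t) := by
        apply ENNReal.ofReal_le_ofReal
        rw [hKdef]
        linarith [hI0]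

end
end

section
/- Let w_1,…,w_l be points on the unit circle in ℂ and let m ∈ ℕ. Then there exist a positive integer d, complex coefficients a_1,…,a_d, and δ > 0 such that the function P(w) := 1 + Σ_{j=1}^{d} a_j w^{−j} satisfies: (i) max_{|w|=1} |P(w)| < m^{−1} + 2^{l/m}, and (ii) |P(e^{iθ})| < 1/2 + 1/m whenever |θ − θ_k| < δ for some k, where w_k = e^{iθ_k}. -/
open Filter Topology MeasureTheory Set

noncomputable section

set_option maxHeartbeats 1000000 in
/-- Let `w_1, …, w_l` be points on the unit circle, `w_k = e^{iθ_k}`, and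
let `m ∈ ℕ`, `m > 0`. Then there are `d ≥ 1`, coefficients `a_1, …, a_d ∈ ℂ` and `δ > 0` such
that `P(w) = 1 + Σ_{j=1}^d a_j w^{−j}` satisfies `|P(w)| < m⁻¹ + 2^{l/m}` for all `|w| = 1`,
and `|P(e^{iθ})| < 1/2 + 1/m` whenever `|θ − θ_k| < δ` for some `k`. -/
theorem truncated_weight_function_bounds
    (l : ℕ) (w : Fin l → ℂ) (θk : Fin l → ℝ)
    (hw : ∀ k, w k = Complex.exp (Complex.I * (θk k : ℂ)))
    (m : ℕ) (hm : 0 < m) :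
    ∃ (d : ℕ) (a : Fin d → ℂ) (δ : ℝ), 0 < d ∧ 0 < δ ∧
      (∀ u : ℂ, ‖u‖ = 1 →
        ‖(1 : ℂ) + ∑ j : Fin d, a j * (u⁻¹) ^ ((j : ℕ) + 1)‖
          < (m : ℝ)⁻¹ + (2 : ℝ) ^ ((l : ℝ) / (m : ℝ))) ∧
      (∀ (θ : ℝ) (k : Fin l), |θ - θk k| < δ →
        ‖(1 : ℂ) + ∑ j : Fin d,
            a j * ((Complex.exp (Complex.I * (θ : ℂ)))⁻¹) ^ ((j : ℕ) + 1)‖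
          < 1 / 2 + 1 / (m : ℝ)) := by
  classical
  have hm0 : (0:ℝ) < m := by exact_mod_cast hm
  have hminv : (0:ℝ) < (m:ℝ)⁻¹ := by positivity
  set ε : ℝ := 1 / 2 ^ (m + l + 2) with hεdef
  have hε0 : 0 < ε := by positivity
  have hε8 : ε ≤ 1 / 8 := by
    rw [hεdef]
    have : (8:ℝ) ≤ 2 ^ (m + l + 2) := by
      calc (8:ℝ) = 2 ^ 3 := by norm_num
      _ ≤ 2 ^ (m + l + 2) := by
        apply pow_le_pow_right₀ (by norm_num)
        omega
    rw [div_le_div_iff₀ (by positivity) (by norm_num)]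
    linarith
  have hε4 : ((2:ℝ) ^ (m + l))⁻¹ = 4 * ε := by
    rw [hεdef, show (2:ℝ) ^ (m + l + 2) = 2 ^ (m + l) * 4 by rw [pow_add]; norm_num]
    rw [one_div, mul_inv]
    ring
  have h4ε : 3 * ε < ((2:ℝ) ^ (m + l))⁻¹ := by
    rw [hε4]; linarith only [hε0]
  set r : ℝ := 1 - ε with hrdef
  have hr0 : (0:ℝ) < r := by rw [hrdef]; linarith
  have hr1 : r < 1 := by rw [hrdef]; linarith
  -- the auxiliary analytic function
  set g : ℂ → ℂ := fun x =>
    Complex.exp (((m:ℝ)⁻¹ : ℂ) * ∑ k, Complex.log (1 - (r:ℂ) * w k * x)) with hgdef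
  have hwk : ∀ k, ‖w k‖ = 1 := by
    intro k
    rw [hw k, Complex.norm_exp]
    simp
  have habs_rwx : ∀ (k : Fin l) (x : ℂ), ‖(r:ℂ) * w k * x‖ = r * ‖x‖ := by
    intro k x
    rw [norm_mul, norm_mul, hwk k, Complex.norm_real, Real.norm_eq_abs, abs_of_pos hr0]
    ring
  -- radii
  set R : ℝ := 2 / (1 + r) with hRdef
  have hR1 : 1 < R := by
    rw [hRdef, lt_div_iff₀ (by linarith)]
    linarith
  have hrR : r * R < 1 := by
    rw [hRdef, ← mul_div_assoc, div_lt_one (by linarith)]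
    linarith
  set R' : ℝ := (1 + R) / 2 with hR'def
  have hR'1 : 1 < R' := by rw [hR'def]; linarith
  have hR'R : R' < R := by rw [hR'def]; linarith
  -- differentiability on the closed ball of radius R
  have hdiff : DifferentiableOn ℂ g (Metric.closedBall (0:ℂ) (R.toNNReal : ℝ)) := by
    apply DifferentiableOn.cexp
    apply DifferentiableOn.const_mul
    apply DifferentiableOn.fun_sum
    intro k _
    apply DifferentiableOn.clog
    · exact (differentiableOn_const _).sub
        (((differentiableOn_const _).mul differentiableOn_id))
    · intro x hx
      simp only [Metric.mem_closedBall, dist_zero_right] at hx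
      rw [Real.coe_toNNReal _ (by linarith)] at hx
      refine Or.inl ?_
      have h1 : ((1:ℂ) - (r:ℂ) * w k * x).re = 1 - ((r:ℂ) * w k * x).re := by
        simp [Complex.sub_re]
      rw [h1]
      have h2 : ((r:ℂ) * w k * x).re ≤ ‖(r:ℂ) * w k * x‖ := Complex.re_le_norm _
      have h3 : ‖(r:ℂ) * w k * x‖ = r * ‖x‖ := habs_rwx k x
      have h4 : r * ‖x‖ ≤ r * R := by
        apply mul_le_mul_of_nonneg_left _ hr0.le
        simpa using hx
      linarith
  have hRpos : (0:NNReal) < R.toNNReal := by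
    rw [← Real.toNNReal_zero, Real.toNNReal_lt_toNNReal_iff (by linarith)]
    linarith
  obtain ⟨p, hF⟩ : ∃ p : FormalMultilinearSeries ℂ ℂ ℂ,
      HasFPowerSeriesOnBall g p 0 R.toNNReal :=
    ⟨_, hdiff.hasFPowerSeriesOnBall hRpos⟩
  have hunif : TendstoUniformlyOn (fun n y => p.partialSum n y) (fun y => g (0 + y)) atTop
      (Metric.ball (0:ℂ) (R'.toNNReal : NNReal)) := by
    apply hF.tendstoUniformlyOn
    rw [ENNReal.coe_lt_coe, Real.toNNReal_lt_toNNReal_iff (by linarith)]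
    exact hR'R
  have hev : ∀ᶠ n in atTop, ∀ x ∈ Metric.ball (0:ℂ) (R'.toNNReal : NNReal),
      dist (g (0 + x)) (p.partialSum n x) < (m:ℝ)⁻¹ :=
    Metric.tendstoUniformlyOn_iff.mp hunif _ hminv
  obtain ⟨N, hN⟩ := Filter.eventually_atTop.mp hev
  set n : ℕ := max N 2 with hndef
  have hn : ∀ x ∈ Metric.ball (0:ℂ) (R'.toNNReal : NNReal),
      dist (g (0 + x)) (p.partialSum n x) < (m:ℝ)⁻¹ := hN n (le_max_left _ _)
  set d : ℕ := n - 1 with hddef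
  have hnd : n = d + 1 := by omega
  have hd0 : 0 < d := by omega
  -- membership of unit vectors in the ball
  have hmem : ∀ x : ℂ, ‖x‖ = 1 → x ∈ Metric.ball (0:ℂ) (R'.toNNReal : NNReal) := by
    intro x hx
    rw [Metric.mem_ball, dist_zero_right, hx]
    rw [Real.coe_toNNReal _ (by linarith)]
    exact hR'1
  -- the truncation equals the claimed expression
  have hcoeff0 : p.coeff 0 = 1 := by
    have h1 : p 0 (fun _ => 1) = g 0 := hF.coeff_zero _
    have h2 : g 0 = 1 := by
      rw [hgdef]
      simp [Complex.log_one]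
    rw [FormalMultilinearSeries.coeff]
    rw [show (1 : Fin 0 → ℂ) = (fun _ => 1) from rfl] at *
    rw [h1, h2]
  have hsum : ∀ x : ℂ,
      (1:ℂ) + ∑ j : Fin d, p.coeff ((j:ℕ)+1) * x ^ ((j:ℕ)+1) = p.partialSum n x := by
    intro x
    rw [FormalMultilinearSeries.partialSum]
    simp only [FormalMultilinearSeries.apply_eq_pow_smul_coeff, smul_eq_mul]
    rw [hnd, Finset.sum_range_succ']
    rw [Fin.sum_univ_eq_sum_range (fun j => p.coeff (j+1) * x ^ (j+1)) d]
    rw [hcoeff0]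
    simp only [pow_zero, one_mul, mul_one]
    rw [add_comm]
    congr 1
    apply Finset.sum_congr rfl
    intro i _
    ring
  -- positivity and basic bounds on the factors
  have habs_pos : ∀ (k : Fin l) (x : ℂ), ‖x‖ ≤ 1 →
      0 < ‖1 - (r:ℂ) * w k * x‖ := by
    intro k x hx
    have h1 : ‖(1:ℂ)‖ - ‖(r:ℂ) * w k * x‖
        ≤ ‖1 - (r:ℂ) * w k * x‖ := by
      simpa using norm_sub_norm_le (1:ℂ) ((r:ℂ) * w k * x)
    have h2 : ‖(r:ℂ) * w k * x‖ = r * ‖x‖ := habs_rwx k x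
    have h3 : r * ‖x‖ ≤ r := by
      nlinarith [norm_nonneg x]
    simp only [norm_one] at h1
    linarith
  have habs_le2 : ∀ (k : Fin l) (x : ℂ), ‖x‖ ≤ 1 →
      ‖1 - (r:ℂ) * w k * x‖ ≤ 2 := by
    intro k x hx
    have h1 : ‖1 - (r:ℂ) * w k * x‖
        ≤ ‖(1:ℂ)‖ + ‖(r:ℂ) * w k * x‖ := by
      simpa using norm_sub_le (1:ℂ) ((r:ℂ) * w k * x)
    have h2 : ‖(r:ℂ) * w k * x‖ = r * ‖x‖ := habs_rwx k x
    have h3 : r * ‖x‖ ≤ r := by nlinarith [norm_nonneg x]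
    simp only [norm_one] at h1
    linarith
  -- norm formula for g
  have hnormg : ∀ x : ℂ, ‖g x‖
      = Real.exp ((m:ℝ)⁻¹ * ∑ k, Real.log (‖1 - (r:ℂ) * w k * x‖)) := by
    intro x
    rw [hgdef]
    rw [Complex.norm_exp]
    congr 1
    rw [← Complex.ofReal_inv, Complex.re_ofReal_mul, Complex.re_sum]
    congr 1
    apply Finset.sum_congr rfl
    intro k _
    rw [Complex.log_re]
  -- global bound on g
  have hgbound : ∀ x : ℂ, ‖x‖ ≤ 1 → ‖g x‖ ≤ (2:ℝ) ^ ((l:ℝ) / (m:ℝ)) := by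
    intro x hx
    rw [hnormg x]
    have hsumlog : ∑ k, Real.log (‖1 - (r:ℂ) * w k * x‖) ≤ (l:ℝ) * Real.log 2 := by
      calc ∑ k, Real.log (‖1 - (r:ℂ) * w k * x‖)
          ≤ ∑ _k : Fin l, Real.log 2 := by
            apply Finset.sum_le_sum
            intro k _
            exact Real.log_le_log (habs_pos k x hx) (habs_le2 k x hx)
        _ = (l:ℝ) * Real.log 2 := by
            rw [Finset.sum_const, Finset.card_univ, Fintype.card_fin, nsmul_eq_mul]
    have h2 : (2:ℝ) ^ ((l:ℝ) / (m:ℝ)) = Real.exp ((m:ℝ)⁻¹ * ((l:ℝ) * Real.log 2)) := by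
      rw [Real.rpow_def_of_pos (by norm_num : (0:ℝ) < 2)]
      congr 1
      field_simp
    rw [h2]
    apply Real.exp_le_exp.mpr
    exact mul_le_mul_of_nonneg_left hsumlog (by positivity)
  -- assemble
  refine ⟨d, fun j => p.coeff ((j:ℕ)+1), ε, hd0, hε0, ?_, ?_⟩
  · -- global bound
    intro u hu
    have hx1 : ‖u⁻¹‖ = 1 := by rw [norm_inv, hu, inv_one]
    have hxball := hmem _ hx1
    have hdist := hn _ hxball
    rw [zero_add] at hdist
    have heq := hsum u⁻¹
    calc ‖(1:ℂ) + ∑ j : Fin d, p.coeff ((j:ℕ)+1) * (u⁻¹) ^ ((j:ℕ)+1)‖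
        = ‖g u⁻¹ + (p.partialSum n u⁻¹ - g u⁻¹)‖ := by rw [heq]; ring_nf
      _ ≤ ‖g u⁻¹‖ + ‖p.partialSum n u⁻¹ - g u⁻¹‖ := norm_add_le _ _
      _ = ‖g u⁻¹‖ + dist (g u⁻¹) (p.partialSum n u⁻¹) := by
          rw [dist_eq_norm, norm_sub_rev]
      _ < (2:ℝ) ^ ((l:ℝ) / (m:ℝ)) + (m:ℝ)⁻¹ := by
          have h1 : ‖g u⁻¹‖ ≤ (2:ℝ) ^ ((l:ℝ) / (m:ℝ)) := by
            apply hgbound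
            rw [hx1]
          linarith
      _ = (m:ℝ)⁻¹ + (2:ℝ) ^ ((l:ℝ) / (m:ℝ)) := by ring
  · -- corner bound
    intro θ k hθ
    set x : ℂ := (Complex.exp (Complex.I * (θ:ℂ)))⁻¹ with hxdef
    have hexpabs : ∀ t : ℝ, ‖Complex.exp (Complex.I * (t:ℂ))‖ = 1 := by
      intro t
      rw [Complex.norm_exp]
      simp
    have hx1 : ‖x‖ = 1 := by
      rw [hxdef, norm_inv, hexpabs, inv_one]
    have hxball := hmem _ hx1
    have hdist := hn _ hxball
    rw [zero_add] at hdist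
    have heq := hsum x
    have hl1 : 0 < l := k.pos
    -- bound on the k-th factor
    set s : ℝ := θk k - θ with hsdef
    have hs : |s| < ε := by rw [hsdef, abs_sub_comm]; exact hθ
    have hwx : w k * x = Complex.exp (Complex.I * (s:ℂ)) := by
      rw [hxdef, hw k, ← Complex.exp_neg, ← Complex.exp_add]
      congr 1
      rw [hsdef]
      push_cast
      ring
    have hcorner : ‖1 - (r:ℂ) * w k * x‖ < 3 * ε := by
      have hE : ‖Complex.exp (Complex.I * (s:ℂ))‖ = 1 := hexpabs s
      have hsplit : (1:ℂ) - (r:ℂ) * w k * x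
          = (1 - Complex.exp (Complex.I * (s:ℂ)))
            + ((ε:ℂ)) * Complex.exp (Complex.I * (s:ℂ)) := by
        rw [mul_assoc, hwx, hrdef]
        push_cast
        ring
      rw [hsplit]
      have h1 : ‖(1:ℂ) - Complex.exp (Complex.I * (s:ℂ))‖
          ≤ 2 * |s| := by
        rw [show (1:ℂ) - Complex.exp (Complex.I * (s:ℂ))
            = -(Complex.exp (Complex.I * (s:ℂ)) - 1) by ring, norm_neg]
        have habsIs : ‖Complex.I * (s:ℂ)‖ = |s| := by
          rw [norm_mul, Complex.norm_I, Complex.norm_real, Real.norm_eq_abs, one_mul]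
        have : ‖Complex.I * (s:ℂ)‖ ≤ 1 := by
          rw [habsIs]; linarith
        calc ‖Complex.exp (Complex.I * (s:ℂ)) - 1‖
            ≤ 2 * ‖Complex.I * (s:ℂ)‖ := Complex.norm_exp_sub_one_le this
          _ = 2 * |s| := by rw [habsIs]
      have h2 : ‖(ε:ℂ) * Complex.exp (Complex.I * (s:ℂ))‖ = ε := by
        rw [norm_mul, hE, Complex.norm_real, Real.norm_eq_abs, abs_of_pos hε0, mul_one]
      have h3 := norm_add_le (1 - Complex.exp (Complex.I * (s:ℂ)))
        ((ε:ℂ) * Complex.exp (Complex.I * (s:ℂ)))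
      rw [h2] at h3
      linarith only [h1, h3, hs, hε0]
    -- log-sum bound at the corner
    have hxabs : ‖x‖ ≤ 1 := by rw [hx1]
    have hlogk : Real.log (‖1 - (r:ℂ) * w k * x‖)
        < -(((m:ℕ):ℝ) + l) * Real.log 2 := by
      have h1 : Real.log (‖1 - (r:ℂ) * w k * x‖)
          < Real.log (((2:ℝ) ^ (m + l))⁻¹) :=
        Real.log_lt_log (habs_pos k x hxabs) (lt_trans hcorner h4ε)
      have h2 : Real.log (((2:ℝ) ^ (m + l))⁻¹) = -(((m:ℕ):ℝ) + l) * Real.log 2 := by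
        rw [Real.log_inv, Real.log_pow]
        push_cast
        ring
      rw [← h2]; exact h1
    have hsumlog : ∑ j, Real.log (‖1 - (r:ℂ) * w j * x‖)
        < -(((m:ℕ):ℝ) + 1) * Real.log 2 := by
      rw [← Finset.add_sum_erase _ _ (Finset.mem_univ k)]
      have hrest : ∑ j ∈ Finset.univ.erase k, Real.log (‖1 - (r:ℂ) * w j * x‖)
          ≤ ((l:ℝ) - 1) * Real.log 2 := by
        calc ∑ j ∈ Finset.univ.erase k, Real.log (‖1 - (r:ℂ) * w j * x‖)
            ≤ ∑ _j ∈ Finset.univ.erase k, Real.log 2 := by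
              apply Finset.sum_le_sum
              intro j _
              exact Real.log_le_log (habs_pos j x hxabs) (habs_le2 j x hxabs)
          _ = ((l:ℝ) - 1) * Real.log 2 := by
              rw [Finset.sum_const, Finset.card_erase_of_mem (Finset.mem_univ k),
                Finset.card_univ, Fintype.card_fin, nsmul_eq_mul]
              rw [Nat.cast_sub hl1]
              norm_num
      have hlog2 : (0:ℝ) < Real.log 2 := Real.log_pos (by norm_num)
      calc Real.log (‖1 - (r:ℂ) * w k * x‖)
            + ∑ j ∈ Finset.univ.erase k, Real.log (‖1 - (r:ℂ) * w j * x‖)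
          < -(((m:ℕ):ℝ) + l) * Real.log 2 + ((l:ℝ) - 1) * Real.log 2 := by
              linarith only [hlogk, hrest]
        _ = -(((m:ℕ):ℝ) + 1) * Real.log 2 := by ring
    have hgcorner : ‖g x‖ < 1 / 2 := by
      rw [hnormg x]
      have hlog2 : (0:ℝ) < Real.log 2 := Real.log_pos (by norm_num)
      have h1 : (m:ℝ)⁻¹ * ∑ j, Real.log (‖1 - (r:ℂ) * w j * x‖)
          < (m:ℝ)⁻¹ * (-(((m:ℕ):ℝ) + 1) * Real.log 2) := by
        apply mul_lt_mul_of_pos_left hsumlog hminv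
      have h2 : (m:ℝ)⁻¹ * (-(((m:ℕ):ℝ) + 1) * Real.log 2) ≤ -Real.log 2 := by
        have h3 : (m:ℝ)⁻¹ * ((m:ℝ) + 1) = 1 + (m:ℝ)⁻¹ := by
          rw [mul_add, mul_one, inv_mul_cancel₀ (ne_of_gt hm0)]
        have h4 : (m:ℝ)⁻¹ * (-(((m:ℕ):ℝ) + 1) * Real.log 2)
            = -((1 + (m:ℝ)⁻¹) * Real.log 2) := by rw [← h3]; ring
        have h5 : Real.log 2 ≤ (1 + (m:ℝ)⁻¹) * Real.log 2 :=
          le_mul_of_one_le_left hlog2.le (by linarith only [hminv])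
        rw [h4]
        linarith only [h5]
      have h4 : Real.exp (-Real.log 2) = 1 / 2 := by
        rw [Real.exp_neg, Real.exp_log (by norm_num : (0:ℝ) < 2)]
        norm_num
      calc Real.exp ((m:ℝ)⁻¹ * ∑ j, Real.log (‖1 - (r:ℂ) * w j * x‖))
          < Real.exp (-Real.log 2) := Real.exp_lt_exp.mpr (by linarith only [h1, h2])
        _ = 1 / 2 := h4
    -- conclude
    calc ‖(1:ℂ) + ∑ j : Fin d, p.coeff ((j:ℕ)+1)
            * ((Complex.exp (Complex.I * (θ:ℂ)))⁻¹) ^ ((j:ℕ)+1)‖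
        = ‖g x + (p.partialSum n x - g x)‖ := by rw [← hxdef, heq]; ring_nf
      _ ≤ ‖g x‖ + ‖p.partialSum n x - g x‖ := norm_add_le _ _
      _ = ‖g x‖ + dist (g x) (p.partialSum n x) := by rw [dist_eq_norm, norm_sub_rev]
      _ < 1 / 2 + 1 / (m:ℝ) := by
          have hdist' : dist (g x) (p.partialSum n x) < 1 / (m:ℝ) := by
            rw [one_div]; exact hdist
          linarith only [hgcorner, hdist']

end
end
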